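/- Let k be a field of characteristic zero and V a vector space over k. In the complete tensor Hopf algebra structure on T(V) (or its completion) where each v ∈ V is primitive, i.e. Δ(v) = v⊗1 + 1⊗v, the set of primitive elements of the (non-completed) tensor Hopf algebra T(V) is exactly the free Lie algebra on V, i.e. the Lie subalgebra of T(V) generated by V under commutators (Friedrichs' criterion). -/

import Mathlib

open TensorProduct

attribute [local instance 100] LieRing.ofAssociativeRing

/-- The shuffle-compatible comultiplication on the tensor algebra `T(V)`, the algebra
map determined by `Δ(v) = v ⊗ 1 + 1 ⊗ v` for `v ∈ V`. -/
noncomputable def tensorComul (k V : Type*) [Field k] [AddCommGroup V] [Module k V] :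
    TensorAlgebra k V →ₐ[k] TensorAlgebra k V ⊗[k] TensorAlgebra k V :=
  TensorAlgebra.lift k
    (((TensorProduct.mk k (TensorAlgebra k V) (TensorAlgebra k V)).flip 1).comp
        (TensorAlgebra.ι k) +
      (TensorProduct.mk k (TensorAlgebra k V) (TensorAlgebra k V) 1).comp
        (TensorAlgebra.ι k))

namespace Friedrichs

variable (k V : Type*) [Field k] [AddCommGroup V] [Module k V]

local notation "T" => TensorAlgebra k V
local notation "ιT" => TensorAlgebra.ι k (M := V)

lemma comul_ι (v : V) :
    tensorComul k V (ιT v) = ιT v ⊗ₜ[k] 1 + 1 ⊗ₜ[k] ιT v := by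
  simp [tensorComul, TensorAlgebra.lift_ι_apply]

/-- The antipode, as an algebra hom into the opposite algebra. -/
noncomputable def Sop : T →ₐ[k] Tᵐᵒᵖ :=
  TensorAlgebra.lift k ((MulOpposite.opLinearEquiv k).toLinearMap ∘ₗ (-(TensorAlgebra.ι k)))

/-- The antipode as a linear endomorphism. -/
noncomputable def S : T →ₗ[k] T :=
  (MulOpposite.opLinearEquiv k (M := T)).symm.toLinearMap ∘ₗ (Sop k V).toLinearMap

lemma S_one : S k V 1 = 1 := by simp [S]

lemma S_mul (a b : T) : S k V (a * b) = S k V b * S k V a := by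
  simp [S, map_mul]

lemma S_ι (v : V) : S k V (ιT v) = - ιT v := by
  simp [S, Sop, TensorAlgebra.lift_ι_apply]

noncomputable def eulF : V →ₗ[k] TrivSqZeroExt T T where
  toFun v := ⟨ιT v, ιT v⟩
  map_add' a b := by ext <;> simp <;> rfl
  map_smul' a b := by ext <;> simp <;> rfl

noncomputable def Φ : T →ₐ[k] TrivSqZeroExt T T := TensorAlgebra.lift k (eulF k V)

lemma Φ_fst (x : T) : (Φ k V x).fst = x := by
  have : ((TrivSqZeroExt.fstHom k T T).comp (Φ k V)) = AlgHom.id k T := by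
    apply TensorAlgebra.hom_ext
    ext v
    simp [Φ, eulF, TensorAlgebra.lift_ι_apply]
    rfl
  exact congrArg (fun f => f x) (congrArg DFunLike.coe this)

/-- The Euler derivation: the unique derivation of `T(V)` with `E (ι v) = ι v`. -/
noncomputable def E : T →ₗ[k] T where
  toFun x := (Φ k V x).snd
  map_add' a b := by simp
  map_smul' a b := by simp

lemma E_ι (v : V) : E k V (ιT v) = ιT v := by
  simp [E, Φ, eulF, TensorAlgebra.lift_ι_apply]
  rfl

lemma E_algebraMap (r : k) : E k V (algebraMap k T r) = 0 := by
  simp only [E, AlgHom.commutes, LinearMap.coe_mk, AddHom.coe_mk]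
  rfl

lemma E_one : E k V 1 = 0 := by simpa using E_algebraMap k V 1

lemma E_mul (a b : T) : E k V (a * b) = a * E k V b + E k V a * b := by
  have := TrivSqZeroExt.snd_mul (Φ k V a) (Φ k V b)
  simp only [E, LinearMap.coe_mk, AddHom.coe_mk, map_mul, this, Φ_fst]
  rfl

lemma left_induction (N : Submodule k T) (h1 : (1:T) ∈ N)
    (hmul : ∀ (v : V) (x : T), x ∈ N → ιT v * x ∈ N) (x : T) : x ∈ N := by
  have H : ∀ x : T, x ∈ N ∧ ∀ y ∈ N, x * y ∈ N := by
    intro x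
    induction x using TensorAlgebra.induction with
    | algebraMap r =>
      refine ⟨?_, fun y hy => ?_⟩
      · simpa [Algebra.algebraMap_eq_smul_one] using N.smul_mem r h1
      · rw [← Algebra.smul_def]
        exact N.smul_mem r hy
    | ι v => exact ⟨by simpa using hmul v 1 h1, fun y hy => hmul v y hy⟩
    | mul a b ha hb =>
      exact ⟨ha.2 b hb.1, fun y hy => by rw [mul_assoc]; exact ha.2 _ (hb.2 y hy)⟩
    | add a b ha hb =>
      exact ⟨N.add_mem ha.1 hb.1, fun y hy => by
        rw [add_mul]; exact N.add_mem (ha.2 y hy) (hb.2 y hy)⟩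
  exact (H x).1

/-- The free Lie algebra inside T(V). -/
noncomputable abbrev L : LieSubalgebra k T :=
  LieSubalgebra.lieSpan k (TensorAlgebra k V) (Set.range ιT)

/-- `Kmap y x = ∑ S(x') * y * x''` where `Δ x = ∑ x' ⊗ x''`. -/
noncomputable def Kmap (y : T) : T →ₗ[k] T :=
  LinearMap.mul' k T ∘ₗ TensorProduct.map (S k V) (LinearMap.mulLeft k y) ∘ₗ
    (tensorComul k V).toLinearMap

lemma Kmap_one (y : T) : Kmap k V y 1 = y := by
  simp [Kmap, S_one, Algebra.TensorProduct.one_def]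

lemma Kmap_aux (y : T) (v : V) (t : T ⊗[k] T) :
    (LinearMap.mul' k T) (TensorProduct.map (S k V) (LinearMap.mulLeft k y)
        ((ιT v ⊗ₜ[k] 1) * t + (1 ⊗ₜ[k] ιT v) * t)) =
      (LinearMap.mul' k T) (TensorProduct.map (S k V) (LinearMap.mulLeft k ⁅y, ιT v⁆) t) := by
  induction t with
  | zero => simp
  | add s t hs ht =>
    rw [mul_add, mul_add]
    rw [show (ιT v ⊗ₜ[k] 1) * s + (ιT v ⊗ₜ[k] 1) * t + ((1 ⊗ₜ[k] ιT v) * s + (1 ⊗ₜ[k] ιT v) * t)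
        = ((ιT v ⊗ₜ[k] 1) * s + (1 ⊗ₜ[k] ιT v) * s) + ((ιT v ⊗ₜ[k] 1) * t + (1 ⊗ₜ[k] ιT v) * t)
      by abel]
    rw [map_add, map_add, hs, ht, map_add, map_add]
  | tmul a b =>
    simp only [map_add, Algebra.TensorProduct.tmul_mul_tmul, one_mul, TensorProduct.map_tmul,
      LinearMap.mul'_apply, LinearMap.mulLeft_apply, S_mul, S_ι, Ring.lie_def]
    noncomm_ring

lemma Kmap_ι_mul (y : T) (v : V) (x : T) :
    Kmap k V y (ιT v * x) = Kmap k V ⁅y, ιT v⁆ x := by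
  have hΔ : tensorComul k V (ιT v * x)
      = (ιT v ⊗ₜ[k] 1) * tensorComul k V x + (1 ⊗ₜ[k] ιT v) * tensorComul k V x := by
    rw [map_mul, comul_ι, add_mul]
  simp only [Kmap, LinearMap.comp_apply, AlgHom.toLinearMap_apply, hΔ]
  exact Kmap_aux k V y v (tensorComul k V x)

lemma Kmap_mem (x : T) : ∀ y ∈ L k V, Kmap k V y x ∈ L k V := by
  have : x ∈ ⨅ (y : L k V), (LieSubalgebra.toSubmodule (L k V)).comap (Kmap k V y) := by
    refine left_induction k V _ ?_ ?_ x
    · simp only [Submodule.mem_iInf, Submodule.mem_comap]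
      intro y
      simpa [Kmap_one] using y.2
    · intro v z hz
      simp only [Submodule.mem_iInf, Submodule.mem_comap] at hz ⊢
      intro y
      rw [Kmap_ι_mul]
      exact hz ⟨⁅(y : T), ιT v⁆, (L k V).lie_mem y.2 (LieSubalgebra.subset_lieSpan ⟨v, rfl⟩)⟩
  simp only [Submodule.mem_iInf, Submodule.mem_comap] at this
  exact fun y hy => this ⟨y, hy⟩

/-- `G = μ ∘ (S ⊗ E) ∘ Δ`, the convolution `S ⋆ E`; equals the Dynkin idempotent-ish map. -/
noncomputable def G : T →ₗ[k] T :=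
  LinearMap.mul' k T ∘ₗ TensorProduct.map (S k V) (E k V) ∘ₗ (tensorComul k V).toLinearMap

lemma G_aux (v : V) (t : T ⊗[k] T) :
    (LinearMap.mul' k T) (TensorProduct.map (S k V) (E k V)
        ((ιT v ⊗ₜ[k] 1) * t + (1 ⊗ₜ[k] ιT v) * t)) =
      (LinearMap.mul' k T) (TensorProduct.map (S k V) (LinearMap.mulLeft k (ιT v)) t) := by
  induction t with
  | zero => simp
  | add s t hs ht =>
    rw [mul_add, mul_add]
    rw [show (ιT v ⊗ₜ[k] 1) * s + (ιT v ⊗ₜ[k] 1) * t + ((1 ⊗ₜ[k] ιT v) * s + (1 ⊗ₜ[k] ιT v) * t)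
        = ((ιT v ⊗ₜ[k] 1) * s + (1 ⊗ₜ[k] ιT v) * s) + ((ιT v ⊗ₜ[k] 1) * t + (1 ⊗ₜ[k] ιT v) * t)
      by abel]
    rw [map_add, map_add, hs, ht, map_add, map_add]
  | tmul a b =>
    simp only [map_add, Algebra.TensorProduct.tmul_mul_tmul, one_mul, TensorProduct.map_tmul,
      LinearMap.mul'_apply, LinearMap.mulLeft_apply, S_mul, S_ι, E_mul, E_ι]
    noncomm_ring

lemma G_ι_mul (v : V) (x : T) : G k V (ιT v * x) = Kmap k V (ιT v) x := by
  have hΔ : tensorComul k V (ιT v * x)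
      = (ιT v ⊗ₜ[k] 1) * tensorComul k V x + (1 ⊗ₜ[k] ιT v) * tensorComul k V x := by
    rw [map_mul, comul_ι, add_mul]
  simp only [G, Kmap, LinearMap.comp_apply, AlgHom.toLinearMap_apply, hΔ]
  exact G_aux k V v (tensorComul k V x)

lemma G_mem (x : T) : G k V x ∈ L k V := by
  have : x ∈ (LieSubalgebra.toSubmodule (L k V)).comap (G k V) := by
    refine left_induction k V _ ?_ ?_ x
    · have : G k V 1 = 0 := by simp [G, E_one, Algebra.TensorProduct.one_def]
      simp [Submodule.mem_comap, this]
    · intro v z _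
      simp only [Submodule.mem_comap, G_ι_mul]
      exact Kmap_mem k V z (ιT v) (LieSubalgebra.subset_lieSpan ⟨v, rfl⟩)
  exact this

/-- The linear map `x ↦ x ⊗ 1 + 1 ⊗ x`. -/
noncomputable def jmap : T →ₗ[k] T ⊗[k] T :=
  ((TensorProduct.mk k T T).flip 1) + ((TensorProduct.mk k T T) 1)

lemma jmap_apply (x : T) : jmap k V x = x ⊗ₜ[k] 1 + 1 ⊗ₜ[k] x := rfl

/-- Primitive elements as a submodule. -/
noncomputable def Psub : Submodule k T :=
  LinearMap.eqLocus (tensorComul k V).toLinearMap (jmap k V)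

lemma mem_Psub {x : T} : x ∈ Psub k V ↔ tensorComul k V x = x ⊗ₜ[k] 1 + 1 ⊗ₜ[k] x :=
  Iff.rfl

/-- `E ⊗ 1 + 1 ⊗ E` on `T ⊗ T`. -/
noncomputable def Etil : T ⊗[k] T →ₗ[k] T ⊗[k] T :=
  (E k V).rTensor (TensorAlgebra k V) + (E k V).lTensor (TensorAlgebra k V)

lemma Etil_tmul (a b : T) : Etil k V (a ⊗ₜ[k] b) = E k V a ⊗ₜ[k] b + a ⊗ₜ[k] E k V b := rfl

lemma Etil_mul (s t : T ⊗[k] T) : Etil k V (s * t) = Etil k V s * t + s * Etil k V t := by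
  induction s with
  | zero => simp
  | add s₁ s₂ h₁ h₂ =>
    simp only [add_mul, map_add, h₁, h₂]
    abel
  | tmul a b =>
    induction t with
    | zero => simp
    | add t₁ t₂ h₁ h₂ =>
      simp only [mul_add, map_add, h₁, h₂]
      abel
    | tmul c d =>
      simp only [Algebra.TensorProduct.tmul_mul_tmul, Etil_tmul, E_mul,
        TensorProduct.add_tmul, TensorProduct.tmul_add]
      rw [show (a * E k V c) ⊗ₜ[k] (b * d) = a ⊗ₜ[k] b * (E k V c) ⊗ₜ[k] d by
        rw [Algebra.TensorProduct.tmul_mul_tmul],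
        show (E k V a * c) ⊗ₜ[k] (b * d) = (E k V a) ⊗ₜ[k] b * c ⊗ₜ[k] d by
        rw [Algebra.TensorProduct.tmul_mul_tmul],
        show (a * c) ⊗ₜ[k] (b * E k V d) = a ⊗ₜ[k] b * c ⊗ₜ[k] (E k V d) by
        rw [Algebra.TensorProduct.tmul_mul_tmul],
        show (a * c) ⊗ₜ[k] (E k V b * d) = a ⊗ₜ[k] (E k V b) * c ⊗ₜ[k] d by
        rw [Algebra.TensorProduct.tmul_mul_tmul]]
      rw [add_mul, mul_add]
      abel

lemma comul_E (x : T) : tensorComul k V (E k V x) = Etil k V (tensorComul k V x) := by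
  induction x using TensorAlgebra.induction with
  | algebraMap r =>
    rw [E_algebraMap, map_zero, AlgHom.commutes, Algebra.TensorProduct.algebraMap_apply]
    simp [Etil_tmul, E_algebraMap, E_one]
  | ι v =>
    rw [E_ι, comul_ι]
    simp [Etil_tmul, E_ι, E_one]
  | mul a b ha hb =>
    rw [E_mul, map_add, map_mul, map_mul, ha, hb, map_mul, Etil_mul, add_comm]
  | add a b ha hb => simp [map_add, ha, hb]

lemma E_mem_Psub {x : T} (hx : x ∈ Psub k V) : E k V x ∈ Psub k V := by
  rw [mem_Psub] at hx ⊢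
  rw [comul_E, hx]
  simp [Etil_tmul, E_one, map_add]

lemma G_eq_E {x : T} (hx : x ∈ Psub k V) : G k V x = E k V x := by
  rw [mem_Psub] at hx
  simp [G, hx, map_add, S_one, E_one]

noncomputable abbrev Mn (n : ℕ) : Submodule k T :=
  LinearMap.range (TensorAlgebra.ι k : V →ₗ[k] T) ^ n

lemma E_homog {n : ℕ} {x : T} (hx : x ∈ Mn k V n) : E k V x = (n : k) • x := by
  induction hx using Submodule.pow_induction_on_left' with
  | algebraMap r => simp [E_algebraMap]
  | add x y i hx hy ihx ihy => rw [map_add, ihx, ihy, smul_add]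
  | mem_mul m hm i x hx ih =>
    obtain ⟨v, rfl⟩ := hm
    rw [E_mul, ih, E_ι]
    push_cast
    rw [add_smul, one_smul, mul_smul_comm]

lemma exists_decomp (x : T) :
    ∃ (F : Finset ℕ) (f : ℕ → T), (∀ n, f n ∈ Mn k V n) ∧ x = ∑ n ∈ F, f n := by
  classical
  refine ⟨(DirectSum.decompose (Mn k V ·) x).support,
    fun n => ((DirectSum.decompose (Mn k V ·) x) n : T), fun n => SetLike.coe_mem _, ?_⟩
  exact (DirectSum.sum_support_decompose _ x).symm

lemma Psub_degree_zero {x : T} (hx : x ∈ Mn k V 0) (hp : x ∈ Psub k V) : x = 0 := by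
  simp only [Mn, pow_zero, Submodule.mem_one] at hx
  obtain ⟨c, rfl⟩ := hx
  rw [mem_Psub] at hp
  set q : T ⊗[k] T →ₐ[k] k :=
    Algebra.TensorProduct.lift (TensorAlgebra.algebraMapInv) (TensorAlgebra.algebraMapInv)
      (fun _ _ => Commute.all _ _) with hq
  have h2 := congrArg q hp
  rw [AlgHom.commutes, map_add] at h2
  simp only [hq, Algebra.TensorProduct.lift_tmul, map_one, mul_one, one_mul,
    TensorAlgebra.algebraMapInv, AlgHom.commutes] at h2
  have hc : c = 0 := by
    have h3 : c + c = c := by simpa using h2.symm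
    exact add_eq_left.mp h3
  rw [hc, map_zero]

lemma sum_mem_L [CharZero k] (F : Finset ℕ) : ∀ f : ℕ → T, (∀ n, f n ∈ Mn k V n) →
    (∑ n ∈ F, f n) ∈ Psub k V → (∑ n ∈ F, f n) ∈ (L k V).toSubmodule := by
  classical
  induction F using Finset.strongInduction with
  | _ F ih =>
    intro f hf hp
    by_cases hF : ∃ m ∈ F, m ≠ 0
    · obtain ⟨m, hmF, hm0⟩ := hF
      set x := ∑ n ∈ F, f n with hx
      have hmk : (m:k) ≠ 0 := Nat.cast_ne_zero.mpr hm0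
      have hEx : E k V x ∈ (L k V).toSubmodule := by
        rw [← G_eq_E k V hp]; exact G_mem k V x
      set g : ℕ → T := fun n => f n - ((m:k)⁻¹ * (n:k)) • f n with hg
      have hgmem : ∀ n, g n ∈ Mn k V n :=
        fun n => Submodule.sub_mem _ (hf n) (Submodule.smul_mem _ _ (hf n))
      have hgm : g m = 0 := by
        simp [hg, inv_mul_cancel₀ hmk]
      have hz : ∑ n ∈ F.erase m, g n = x - (m:k)⁻¹ • E k V x := by
        rw [Finset.sum_erase _ hgm]
        have hEsum : E k V x = ∑ n ∈ F, (n:k) • f n := by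
          rw [hx, map_sum]; exact Finset.sum_congr rfl (fun n _ => E_homog k V (hf n))
        rw [hEsum, hx, Finset.smul_sum, ← Finset.sum_sub_distrib]
        exact Finset.sum_congr rfl (fun n _ => by rw [hg]; simp [smul_smul])
      have hzP : (∑ n ∈ F.erase m, g n) ∈ Psub k V := by
        rw [hz]
        exact Submodule.sub_mem _ hp (Submodule.smul_mem _ _ (E_mem_Psub k V hp))
      have hzL := ih (F.erase m) (Finset.erase_ssubset hmF) g hgmem hzP
      have hxz : x = (∑ n ∈ F.erase m, g n) + (m:k)⁻¹ • E k V x := by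
        rw [hz]; abel
      rw [hxz]
      exact Submodule.add_mem _ hzL (Submodule.smul_mem _ _ hEx)
    · push_neg at hF
      have hsub : F ⊆ {0} := fun m hm => by
        simp [hF m hm]
      rcases Finset.subset_singleton_iff.mp hsub with h | h
      · rw [h, Finset.sum_empty]
        exact Submodule.zero_mem _
      · rw [h, Finset.sum_singleton] at hp ⊢
        rw [Psub_degree_zero k V (hf 0) hp]
        exact Submodule.zero_mem _

/-- Primitives form a Lie subalgebra. -/
noncomputable def LP : LieSubalgebra k T :=
  { Psub k V with
    lie_mem' := by
      intro x y hx hy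
      replace hx : tensorComul k V x = x ⊗ₜ[k] 1 + 1 ⊗ₜ[k] x := hx
      replace hy : tensorComul k V y = y ⊗ₜ[k] 1 + 1 ⊗ₜ[k] y := hy
      show tensorComul k V ⁅x, y⁆ = ⁅x, y⁆ ⊗ₜ[k] 1 + 1 ⊗ₜ[k] ⁅x, y⁆
      rw [Ring.lie_def, map_sub, map_mul, map_mul, hx, hy]
      simp only [add_mul, mul_add, Algebra.TensorProduct.tmul_mul_tmul, one_mul, mul_one,
        TensorProduct.sub_tmul, TensorProduct.tmul_sub]
      abel }

lemma mem_LP {x : T} : x ∈ LP k V ↔ tensorComul k V x = x ⊗ₜ[k] 1 + 1 ⊗ₜ[k] x := Iff.rfl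

end Friedrichs

/-- Friedrichs' criterion: over a field of characteristic zero, the primitive elements
of the tensor Hopf algebra `T(V)` (with every `v ∈ V` primitive) are exactly the free
Lie algebra on `V`, i.e. the Lie subalgebra of `T(V)` (under commutators) generated by
`V`. -/
theorem stmt_17 (k V : Type*) [Field k] [CharZero k] [AddCommGroup V] [Module k V] :
    {x : TensorAlgebra k V | tensorComul k V x = x ⊗ₜ[k] 1 + 1 ⊗ₜ[k] x} =
      (LieSubalgebra.lieSpan k (TensorAlgebra k V)
        (Set.range (TensorAlgebra.ι k (M := V))) : Set (TensorAlgebra k V)) := by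
  ext x
  constructor
  · intro hx
    have hx' : x ∈ Friedrichs.Psub k V := hx
    obtain ⟨F, f, hf, rfl⟩ := Friedrichs.exists_decomp k V x
    exact Friedrichs.sum_mem_L k V F f hf hx'
  · intro hx
    have hle : Friedrichs.L k V ≤ Friedrichs.LP k V := by
      rw [LieSubalgebra.lieSpan_le]
      rintro _ ⟨v, rfl⟩
      rw [SetLike.mem_coe, Friedrichs.mem_LP]
      exact Friedrichs.comul_ι k V v
    exact hle hx
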